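/- The global operator θ̄_{x₂} = ½(∂/∂x_{2,0} - (Im x₂)⁻¹ Σᵢ₌₁³ x_{2,i} ∂/∂x_{2,i}) does not vanish on the slice-regular function f(x₁,x₂) = x₁x₂: explicitly, θ_{x₂}(x₁x₂)(x₁,x₂) = x_{1,0} + (Im x₂)/|Im x₂|² · Σᵢ₌₁³ x_{1,i} x_{2,i} for x₂ ∉ ℝ, and in particular θ_{x₂}(x₁x₂) restricted to ℂ_i × ℂ_i equals x₁. -/

import Mathlib

def qi : Quaternion ℝ := ⟨0, 1, 0, 0⟩
def qj : Quaternion ℝ := ⟨0, 0, 1, 0⟩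
def qk : Quaternion ℝ := ⟨0, 0, 0, 1⟩

/-- The global operator `θ = ½(∂/∂x₀ + (Im x)⁻¹ Σᵢ xᵢ ∂/∂xᵢ)` in one quaternionic
variable; applied to `y ↦ f(x₁, y)` it is the operator `θ_{x₂}`. -/
noncomputable def theta (f : Quaternion ℝ → Quaternion ℝ) (x : Quaternion ℝ) : Quaternion ℝ :=
  (1 / 2 : ℝ) • (fderiv ℝ f x 1 +
    (x.im)⁻¹ * (x.imI • fderiv ℝ f x qi + x.imJ • fderiv ℝ f x qj + x.imK • fderiv ℝ f x qk))

/-- `θ_{x₂}(x₁x₂) = x_{1,0} + (Im x₂)/|Im x₂|² · Σᵢ x_{1,i} x_{2,i}`; in particular on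
`ℂ_i × ℂ_i` it equals `x₁` (and is not a slice function). -/
theorem theta_x2_of_x1_mul_x2 (x₁ x₂ : Quaternion ℝ) (hx₂ : x₂.im ≠ 0) :
    theta (fun y => x₁ * y) x₂ =
      (x₁.re : Quaternion ℝ) + (‖x₂.im‖ ^ 2)⁻¹ •
        (x₂.im * ((x₁.imI * x₂.imI + x₁.imJ * x₂.imJ + x₁.imK * x₂.imK : ℝ) : Quaternion ℝ)) ∧
    (x₁.imJ = 0 → x₁.imK = 0 → x₂.imJ = 0 → x₂.imK = 0 →
      theta (fun y => x₁ * y) x₂ = x₁) := by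
  have hf : ∀ v, fderiv ℝ (fun y => x₁ * y) x₂ v = x₁ * v := by
    intro v
    have : (fun y : Quaternion ℝ => x₁ * y) = (ContinuousLinearMap.mul ℝ (Quaternion ℝ) x₁) := rfl
    rw [this, ContinuousLinearMap.fderiv]; rfl
  have hs : Quaternion.normSq x₂.im ≠ 0 := Quaternion.normSq_ne_zero.mpr hx₂
  have hnorm : ‖x₂.im‖ ^ 2 = Quaternion.normSq x₂.im := by
    rw [sq, ← Quaternion.normSq_eq_norm_mul_self]
  have hmain : theta (fun y => x₁ * y) x₂ =
      (x₁.re : Quaternion ℝ) + (‖x₂.im‖ ^ 2)⁻¹ •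
        (x₂.im * ((x₁.imI * x₂.imI + x₁.imJ * x₂.imJ + x₁.imK * x₂.imK : ℝ) : Quaternion ℝ)) := by
    simp only [theta, hf, hnorm]
    rw [Quaternion.inv_def]
    have hs' : Quaternion.normSq x₂.im = x₂.imI^2 + x₂.imJ^2 + x₂.imK^2 := by
      rw [Quaternion.normSq_def']; simp
    rw [hs'] at hs ⊢
    ext <;>
      simp [Quaternion.ext_iff, Quaternion.re_mul, Quaternion.imI_mul,
        Quaternion.imJ_mul, Quaternion.imK_mul] <;> simp [qi, qj, qk] <;>
      field_simp <;> ring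
  refine ⟨hmain, fun h1 h2 h3 h4 => ?_⟩
  rw [hmain, h1, h2, h3, h4]
  have him : x₂.imI ≠ 0 := by
    intro h; apply hx₂; ext <;> simp [h, h3, h4, Quaternion.re_zero, Quaternion.imI_zero, Quaternion.imJ_zero, Quaternion.imK_zero]
  have hn : ‖x₂.im‖^2 = x₂.imI^2 := by rw [hnorm, Quaternion.normSq_def']; simp [h3, h4]
  rw [hn]
  ext <;> simp [Quaternion.ext_iff, h1, h2, h3, h4] <;> field_simp <;> ring
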